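/- Let X act on a group Q by automorphisms and suppose Q admits a finite X-stable filtration Q = Q(1) ⊵ Q(2) ⊵ … ⊵ Q(r+1) = 1 such that for each i, the quotient V_i = Q(i)/Q(i+1) is central in Q/Q(i+1). If for every i, every 1-cocycle X → V_i is a coboundary (i.e., of the form x ↦ −v + x·v for some v ∈ V_i, written additively), then every 1-cocycle X → Q is a coboundary, i.e., of the form x ↦ q⁻¹(x·q) for some q ∈ Q. -/

import Mathlib

open scoped commutatorElement

/-- A 1-cocycle for the action of `X` on `Q` by automorphisms. -/
def IsCocycle {X Q : Type*} [Group X] [Group Q] [MulDistribMulAction X Q]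
    (f : X → Q) : Prop :=
  ∀ x y : X, f (x * y) = f x * x • f y

/-- If `Q` has a finite `X`-stable filtration `Q = Q(1) ⊵ ⋯ ⊵ Q(r+1) = 1` with each
level `V_i = Q(i)/Q(i+1)` central in `Q/Q(i+1)`, and every 1-cocycle of `X` into each
level is a coboundary, then every 1-cocycle `X → Q` is a coboundary, i.e.
`H¹(X,Q)` is trivial. Cocycles into the level `V_i` are represented by maps
`X → Q(i)` satisfying the cocycle identity modulo `Q(i+1)`. -/
theorem cocycle_coboundary_of_filtration (X Q : Type*) [Group X] [Group Q]
    [MulDistribMulAction X Q] (r : ℕ) (F : ℕ → Subgroup Q)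
    (hnormal : ∀ i, (F i).Normal)
    (hstable : ∀ (i : ℕ) (x : X) (q : Q), q ∈ F i → x • q ∈ F i)
    (hdesc : ∀ i, F (i + 1) ≤ F i)
    (htop : F 1 = ⊤) (hbot : F (r + 1) = ⊥)
    (hcentral : ∀ i, 1 ≤ i → i ≤ r → ∀ q ∈ F i, ∀ g : Q, ⁅g, q⁆ ∈ F (i + 1))
    (hlevels : ∀ i, 1 ≤ i → i ≤ r → ∀ f : X → Q, (∀ x, f x ∈ F i) →
      (∀ x y : X, (f (x * y))⁻¹ * (f x * x • f y) ∈ F (i + 1)) →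
      ∃ v ∈ F i, ∀ x : X, (f x)⁻¹ * (v⁻¹ * x • v) ∈ F (i + 1)) :
    ∀ f : X → Q, IsCocycle f → ∃ q : Q, ∀ x : X, f x = q⁻¹ * x • q := by
  intro f hf
  suffices h : ∀ i, 1 ≤ i → i ≤ r + 1 → ∃ q : Q, ∀ x : X, q * f x * (x • q)⁻¹ ∈ F i by
    obtain ⟨q, hq⟩ := h (r + 1) (by omega) le_rfl
    refine ⟨q, fun x => ?_⟩
    have h1 : q * f x * (x • q)⁻¹ = 1 := by
      have := hq x
      rwa [hbot, Subgroup.mem_bot] at this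
    have h2 : q * f x = x • q := by
      have := mul_inv_eq_one.mp h1
      exact this
    rw [← h2]
    group
  intro i
  induction i with
  | zero => intro h; omega
  | succ n ih =>
    intro _ hle
    rcases Nat.eq_zero_or_pos n with hn | hn
    · subst hn
      exact ⟨1, fun x => by simp [htop]⟩
    · obtain ⟨q, hq⟩ := ih hn (by omega)
      set g : X → Q := fun x => q * f x * (x • q)⁻¹ with hg
      have hgc : ∀ x y : X, g (x * y) = g x * x • g y := by
        intro x y
        simp only [hg, smul_mul', smul_inv', mul_smul, hf x y]
        group
      obtain ⟨v, hv, hvx⟩ := hlevels n hn (by omega) g hq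
        (fun x y => by rw [hgc x y, inv_mul_cancel]; exact (F (n + 1)).one_mem)
      refine ⟨v * q, fun x => ?_⟩
      have key : (v * q) * f x * (x • (v * q))⁻¹ = v * g x * (x • v)⁻¹ := by
        rw [smul_mul']
        simp only [hg]
        group
      rw [key]
      have hN := hvx x
      have : v * g x * (x • v)⁻¹ =
          (v * g x) * ((g x)⁻¹ * (v⁻¹ * x • v))⁻¹ * (v * g x)⁻¹ := by group
      rw [this]
      exact (hnormal (n + 1)).conj_mem _ ((F (n + 1)).inv_mem hN) _
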